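/- Let z_1, …, z_K ∈ ℝ^d, let θ, θ_* ∈ ℝ^d, let V be a symmetric positive definite d×d real matrix, and let β ≥ 0 with ‖θ_* − θ‖_V ≤ β. Suppose a ∈ {1, …, K} maximizes k ↦ ⟨θ, z_k⟩ and b ∈ {1, …, K} maximizes k ↦ ⟨θ, z_k⟩ + 2β‖z_k − z_a‖_{V⁻¹}. Then for every k ∈ {1, …, K}, ⟨θ_*, (z_k − z_a) + (z_k − z_b)⟩ ≤ 3β ‖z_a − z_b‖_{V⁻¹}. -/

import Mathlib

open Matrix

/-- The matrix-weighted (semi)norm `‖x‖_A = √(xᵀ A x)`. -/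
noncomputable def mnorm {d : ℕ} (A : Matrix (Fin d) (Fin d) ℝ) (x : Fin d → ℝ) : ℝ :=
  Real.sqrt (x ⬝ᵥ A.mulVec x)

lemma mnorm_nonneg {d : ℕ} (A : Matrix (Fin d) (Fin d) ℝ) (x : Fin d → ℝ) :
    0 ≤ mnorm A x := Real.sqrt_nonneg _

lemma symm_dot {d : ℕ} {A : Matrix (Fin d) (Fin d) ℝ} (hA : A.IsHermitian)
    (x y : Fin d → ℝ) : x ⬝ᵥ A.mulVec y = y ⬝ᵥ A.mulVec x := by
  rw [dotProduct_mulVec, ← mulVec_transpose, dotProduct_comm]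
  congr 1
  rw [show Aᵀ = A from hA]

lemma mnorm_neg {d : ℕ} (A : Matrix (Fin d) (Fin d) ℝ) (x y : Fin d → ℝ) :
    mnorm A (x - y) = mnorm A (y - x) := by
  unfold mnorm
  rw [show y - x = -(x - y) by ring, mulVec_neg, dotProduct_neg, neg_dotProduct, neg_neg]

/-- Cauchy–Schwarz for a positive definite symmetric bilinear form. -/
lemma cs {d : ℕ} {A : Matrix (Fin d) (Fin d) ℝ} (hA : A.PosDef) (x y : Fin d → ℝ) :
    x ⬝ᵥ A.mulVec y ≤ mnorm A x * mnorm A y := by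
  by_cases hy : y = 0
  · simp [hy, mnorm]
  · have hyy : 0 < y ⬝ᵥ A.mulVec y := by simpa [star_trivial] using hA.dotProduct_mulVec_pos hy
    have hxx : 0 ≤ x ⬝ᵥ A.mulVec x := by simpa [star_trivial] using hA.posSemidef.dotProduct_mulVec_nonneg x
    have hsym : y ⬝ᵥ A.mulVec x = x ⬝ᵥ A.mulVec y := symm_dot hA.1 y x
    set c : ℝ := y ⬝ᵥ A.mulVec y
    set s : ℝ := x ⬝ᵥ A.mulVec y
    have h0 : 0 ≤ (c • x - s • y) ⬝ᵥ A.mulVec (c • x - s • y) := by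
      simpa [star_trivial] using hA.posSemidef.dotProduct_mulVec_nonneg (c • x - s • y)
    have hexp : (c • x - s • y) ⬝ᵥ A.mulVec (c • x - s • y)
        = c^2 * (x ⬝ᵥ A.mulVec x) - 2 * c * s * s + s^2 * c := by
      simp only [mulVec_sub, mulVec_smul, sub_dotProduct, dotProduct_sub,
        smul_dotProduct, dotProduct_smul, smul_eq_mul, hsym]
      ring
    rw [hexp] at h0
    have hkey : (x ⬝ᵥ A.mulVec y)^2 ≤ (x ⬝ᵥ A.mulVec x) * (y ⬝ᵥ A.mulVec y) := by
      nlinarith [h0, hyy]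
    have := Real.sqrt_le_sqrt hkey
    calc x ⬝ᵥ A.mulVec y ≤ |x ⬝ᵥ A.mulVec y| := le_abs_self _
      _ = Real.sqrt ((x ⬝ᵥ A.mulVec y)^2) := (Real.sqrt_sq_eq_abs _).symm
      _ ≤ Real.sqrt ((x ⬝ᵥ A.mulVec x) * (y ⬝ᵥ A.mulVec y)) := this
      _ = mnorm A x * mnorm A y := Real.sqrt_mul hxx _

/-- The dual Cauchy–Schwarz: `⟨w, u⟩ ≤ ‖w‖_V ‖u‖_{V⁻¹}`. -/
lemma dual_cs {d : ℕ} {V : Matrix (Fin d) (Fin d) ℝ} (hV : V.PosDef)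
    (w u : Fin d → ℝ) : w ⬝ᵥ u ≤ mnorm V w * mnorm V⁻¹ u := by
  have hdet : IsUnit V.det := isUnit_iff_ne_zero.2 hV.det_pos.ne'
  have hVV : V.mulVec (V⁻¹.mulVec u) = u := by
    rw [mulVec_mulVec, mul_nonsing_inv _ hdet, one_mulVec]
  have h1 : w ⬝ᵥ u = w ⬝ᵥ V.mulVec (V⁻¹.mulVec u) := by rw [hVV]
  have h2 : (V⁻¹.mulVec u) ⬝ᵥ V.mulVec (V⁻¹.mulVec u) = u ⬝ᵥ V⁻¹.mulVec u := by
    rw [hVV, dotProduct_comm]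
  have := cs hV w (V⁻¹.mulVec u)
  rw [h1]
  calc w ⬝ᵥ V.mulVec (V⁻¹.mulVec u) ≤ mnorm V w * mnorm V (V⁻¹.mulVec u) := this
    _ = mnorm V w * mnorm V⁻¹ u := by unfold mnorm; rw [h2]

theorem instantaneous_regret_bound (d K : ℕ) (z : Fin K → Fin d → ℝ)
    (θ θstar : Fin d → ℝ) (V : Matrix (Fin d) (Fin d) ℝ) (hV : V.PosDef)
    (β : ℝ) (hβ : 0 ≤ β) (hconf : mnorm V (θstar - θ) ≤ β)
    (a b : Fin K)
    (ha : ∀ k, θ ⬝ᵥ z k ≤ θ ⬝ᵥ z a)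
    (hb : ∀ k, θ ⬝ᵥ z k + 2 * β * mnorm V⁻¹ (z k - z a)
            ≤ θ ⬝ᵥ z b + 2 * β * mnorm V⁻¹ (z b - z a)) :
    ∀ k, θstar ⬝ᵥ ((z k - z a) + (z k - z b))
        ≤ 3 * β * mnorm V⁻¹ (z a - z b) := by
  intro k
  set w : Fin d → ℝ := θstar - θ with hw
  have hcs : ∀ u : Fin d → ℝ, w ⬝ᵥ u ≤ β * mnorm V⁻¹ u := fun u => by
    calc w ⬝ᵥ u ≤ mnorm V w * mnorm V⁻¹ u := dual_cs hV w u
      _ ≤ β * mnorm V⁻¹ u :=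
        mul_le_mul_of_nonneg_right hconf (mnorm_nonneg _ _)
  have h1 := hcs (z k - z a)
  have h2 := hcs (z a - z b)
  have h3 := hb k
  have h4 := ha k
  have h5 := ha b
  have hdec : θstar ⬝ᵥ ((z k - z a) + (z k - z b))
      = 2 * (w ⬝ᵥ (z k - z a)) + w ⬝ᵥ (z a - z b)
        + 2 * (θ ⬝ᵥ z k) - (θ ⬝ᵥ z a) - (θ ⬝ᵥ z b) := by
    simp only [hw, sub_dotProduct, dotProduct_add, dotProduct_sub]
    ring
  have hsymn : mnorm V⁻¹ (z b - z a) = mnorm V⁻¹ (z a - z b) := mnorm_neg _ _ _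
  rw [hsymn] at h3
  have hn : 0 ≤ mnorm V⁻¹ (z k - z a) := mnorm_nonneg _ _
  rw [hdec]
  nlinarith [mul_nonneg hβ hn]
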